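/- Laplace-type ratio estimate used in the proof of Lemma 2.1 of the paper: fix real numbers a > 0, θ₂ > 0, β̃ ≤ 1 and δ ∈ (0,1), and let S(x) := β̃x + log(1-x) for x ∈ [0,1). Then lim_{n→∞} [∫_δ^1 e^{n·S(x)} x^{a-1}(1-x)^{θ₂-1} dx] / [∫_0^1 e^{n·S(x)} x^{a-1}(1-x)^{θ₂-1} dx] = 0, where n ranges over the natural numbers. -/

import Mathlib

open Real Filter Topology MeasureTheory Set

/-- Strict monotonicity of `S(x) = βt x + log (1-x)` when `βt ≤ 1`. -/
lemma S_strict_anti_aux {βt x y : ℝ} (hβ : βt ≤ 1) (hx : 0 ≤ x) (hxy : x < y)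
    (hy : y < 1) :
    βt * y + Real.log (1 - y) < βt * x + Real.log (1 - x) := by
  have h1x : (0:ℝ) < 1 - x := by linarith
  have h1y : (0:ℝ) < 1 - y := by linarith
  have hd : (1 - y) / (1 - x) < 1 := by
    rw [div_lt_one h1x]; linarith
  have hlog : Real.log ((1 - y) / (1 - x)) < (1 - y) / (1 - x) - 1 :=
    Real.log_lt_sub_one_of_pos (by positivity) (ne_of_lt hd)
  rw [Real.log_div (ne_of_gt h1y) (ne_of_gt h1x)] at hlog
  set d := (1 - y) / (1 - x) with hd_def
  have hdd : d * (1 - x) = 1 - y := div_mul_cancel₀ _ (ne_of_gt h1x)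
  nlinarith [mul_nonneg (sub_nonneg.2 hd.le) hx,
    mul_nonneg (sub_nonneg.2 hβ) (sub_pos.2 hxy).le]

/-- Weak monotonicity of `S`. -/
lemma S_anti_aux {βt x y : ℝ} (hβ : βt ≤ 1) (hx : 0 ≤ x) (hxy : x ≤ y)
    (hy : y < 1) :
    βt * y + Real.log (1 - y) ≤ βt * x + Real.log (1 - x) := by
  rcases eq_or_lt_of_le hxy with rfl | h
  · exact le_refl _
  · exact (S_strict_anti_aux hβ hx h hy).le

theorem laplace_ratio_estimate (a θ₂ βt δ : ℝ)
    (ha : 0 < a) (hθ₂ : 0 < θ₂) (hβ : βt ≤ 1) (hδ : δ ∈ Set.Ioo (0:ℝ) 1) :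
    Filter.Tendsto (fun n : ℕ =>
        (∫ x in δ..1,
            Real.exp ((n : ℝ) * (βt * x + Real.log (1 - x))) *
              x ^ (a - 1) * (1 - x) ^ (θ₂ - 1)) /
        (∫ x in (0:ℝ)..1,
            Real.exp ((n : ℝ) * (βt * x + Real.log (1 - x))) *
              x ^ (a - 1) * (1 - x) ^ (θ₂ - 1)))
      Filter.atTop (𝓝 0) := by
  obtain ⟨hδ0, hδ1⟩ := hδ
  set S : ℝ → ℝ := fun x => βt * x + Real.log (1 - x) with hS
  set g : ℝ → ℝ := fun x => x ^ (a - 1) * (1 - x) ^ (θ₂ - 1) with hG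
  set f : ℕ → ℝ → ℝ := fun n x => Real.exp ((n : ℝ) * S x) * x ^ (a - 1) * (1 - x) ^ (θ₂ - 1) with hF
  have hfg : ∀ n x, f n x = Real.exp ((n : ℝ) * S x) * g x := by
    intro n x; simp only [hF, hG]; ring
  -- integrability of the beta-type integrand g on [0,1]
  have hg_half : IntervalIntegrable g volume 0 (1/2) := by
    have h1 : IntervalIntegrable (fun x : ℝ => x ^ (a - 1)) volume 0 (1/2) :=
      intervalIntegral.intervalIntegrable_rpow' (by linarith)
    have h2 : ContinuousOn (fun x : ℝ => (1 - x) ^ (θ₂ - 1)) (Set.uIcc (0:ℝ) (1/2)) := by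
      apply ContinuousOn.rpow_const (by fun_prop)
      intro x hx
      rw [Set.uIcc_of_le (by norm_num)] at hx
      exact Or.inl (by rcases hx with ⟨_, h⟩; intro h0; nlinarith)
    exact h1.mul_continuousOn h2
  have hg_half' : IntervalIntegrable g volume (1/2) 1 := by
    have h1 : IntervalIntegrable (fun x : ℝ => x ^ (θ₂ - 1)) volume 0 (1/2) :=
      intervalIntegral.intervalIntegrable_rpow' (by linarith)
    have h2 : IntervalIntegrable (fun x : ℝ => (1 - x) ^ (θ₂ - 1)) volume (1/2) 1 := by
      have := h1.comp_sub_left 1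
      norm_num at this
      exact this.symm
    have h3 : ContinuousOn (fun x : ℝ => x ^ (a - 1)) (Set.uIcc ((1:ℝ)/2) 1) := by
      apply ContinuousOn.rpow_const (by fun_prop)
      intro x hx
      rw [Set.uIcc_of_le (by norm_num)] at hx
      exact Or.inl (by rcases hx with ⟨h, _⟩; intro h0; nlinarith)
    exact h2.continuousOn_mul h3
  have hg_int : IntervalIntegrable g volume 0 1 := hg_half.trans hg_half'
  have hg_nonneg : ∀ x ∈ Set.Icc (0:ℝ) 1, 0 ≤ g x := by
    intro x hx
    exact mul_nonneg (Real.rpow_nonneg hx.1 _) (Real.rpow_nonneg (by linarith [hx.2]) _)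
  -- pointwise bound S x ≤ |βt| on [0,1]
  have hS_bound : ∀ x ∈ Set.Icc (0:ℝ) 1, S x ≤ |βt| := by
    intro x hx
    have hlog : Real.log (1 - x) ≤ 0 := Real.log_nonpos (by linarith [hx.2]) (by linarith [hx.1])
    have : βt * x ≤ |βt| := by
      calc βt * x ≤ |βt * x| := le_abs_self _
        _ = |βt| * |x| := abs_mul _ _
        _ ≤ |βt| * 1 := by
            apply mul_le_mul_of_nonneg_left _ (abs_nonneg _)
            rw [abs_of_nonneg hx.1]; exact hx.2
        _ = |βt| := mul_one _
    simp only [hS]; linarith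
  -- integrability of f n on [0,1]
  have hf_int : ∀ n : ℕ, IntervalIntegrable (f n) volume 0 1 := by
    intro n
    rw [intervalIntegrable_iff_integrableOn_Ioc_of_le (by norm_num)]
    apply MeasureTheory.Integrable.mono' ((hg_int.1).const_mul (Real.exp ((n:ℝ) * |βt|)))
    · have hcont : ContinuousOn (f n) (Set.Ioo (0:ℝ) 1) := by
        simp only [hF, hS]
        apply ContinuousOn.mul
        apply ContinuousOn.mul
        · apply Real.continuous_exp.comp_continuousOn
          apply ContinuousOn.mul continuousOn_const
          apply ContinuousOn.add (continuousOn_const.mul continuousOn_id)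
          exact Real.continuousOn_log.comp (continuousOn_const.sub continuousOn_id)
            (by
              intro x hx
              have h : (1:ℝ) - x ≠ 0 := by
                intro h; have := sub_eq_zero.mp h; linarith [hx.2]
              simpa using h)
        · exact continuousOn_id.rpow_const (fun x hx => Or.inl (ne_of_gt hx.1))
        · exact (continuousOn_const.sub continuousOn_id).rpow_const
            (fun x hx => Or.inl (by show (1:ℝ) - x ≠ 0; rw [sub_ne_zero]; exact (ne_of_lt hx.2).symm))
      rw [← MeasureTheory.Measure.restrict_congr_set MeasureTheory.Ioo_ae_eq_Ioc]
      exact hcont.aestronglyMeasurable measurableSet_Ioo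
    · filter_upwards [MeasureTheory.ae_restrict_mem measurableSet_Ioc] with x hx
      have hx' : x ∈ Set.Icc (0:ℝ) 1 := ⟨hx.1.le, hx.2⟩
      have hg0 : 0 ≤ g x := hg_nonneg x hx'
      have hfx : 0 ≤ f n x := by
        rw [hfg]; exact mul_nonneg (Real.exp_pos _).le hg0
      rw [Real.norm_eq_abs, abs_of_nonneg hfx, hfg]
      apply mul_le_mul_of_nonneg_right _ hg0
      exact Real.exp_le_exp.2 (mul_le_mul_of_nonneg_left (hS_bound x hx') (Nat.cast_nonneg n))
  -- a.e. x ≠ 1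
  have h_ne_one : ∀ᵐ x : ℝ, x ≠ 1 := by
    rw [MeasureTheory.ae_iff]
    simpa using Real.volume_singleton
  set C : ℝ := ∫ x in δ..1, g x with hC
  set c : ℝ := ∫ x in (δ/4)..(δ/2), g x with hc
  have hsub1 : Set.uIcc δ 1 ⊆ Set.uIcc (0:ℝ) 1 :=
    Set.uIcc_subset_uIcc (by rw [Set.uIcc_of_le (by norm_num)]; exact ⟨hδ0.le, hδ1.le⟩)
      (by rw [Set.uIcc_of_le (by norm_num)]; exact ⟨by norm_num, le_refl _⟩)
  have hsub2 : Set.uIcc (δ/4) (δ/2) ⊆ Set.uIcc (0:ℝ) 1 :=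
    Set.uIcc_subset_uIcc (by rw [Set.uIcc_of_le (by norm_num)]; constructor <;> linarith)
      (by rw [Set.uIcc_of_le (by norm_num)]; constructor <;> linarith)
  -- numerator bound
  have hnum_le : ∀ n : ℕ, (∫ x in δ..1, f n x) ≤ Real.exp ((n:ℝ) * S δ) * C := by
    intro n
    have hineq : (∫ x in δ..1, f n x) ≤ ∫ x in δ..1, Real.exp ((n:ℝ) * S δ) * g x := by
      apply intervalIntegral.integral_mono_ae_restrict hδ1.le
        ((hf_int n).mono_set hsub1) ((hg_int.mono_set hsub1).const_mul _)
      filter_upwards [MeasureTheory.ae_restrict_mem measurableSet_Icc,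
        MeasureTheory.ae_restrict_of_ae h_ne_one] with x hx hx1
      have hxlt : x < 1 := lt_of_le_of_ne hx.2 hx1
      have hSx : S x ≤ S δ := S_anti_aux hβ hδ0.le hx.1 hxlt
      rw [hfg]
      apply mul_le_mul_of_nonneg_right _ (hg_nonneg x ⟨by linarith [hx.1], hx.2⟩)
      exact Real.exp_le_exp.2 (mul_le_mul_of_nonneg_left hSx (Nat.cast_nonneg n))
    rwa [intervalIntegral.integral_const_mul] at hineq
  -- denominator lower bound
  have hden_ge : ∀ n : ℕ, Real.exp ((n:ℝ) * S (δ/2)) * c ≤ ∫ x in (0:ℝ)..1, f n x := by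
    intro n
    have step2 : Real.exp ((n:ℝ) * S (δ/2)) * c ≤ ∫ x in (δ/4)..(δ/2), f n x := by
      rw [hc, ← intervalIntegral.integral_const_mul]
      apply intervalIntegral.integral_mono_on (by linarith)
        ((hg_int.mono_set hsub2).const_mul _) ((hf_int n).mono_set hsub2)
      intro x hx
      have hx0 : 0 ≤ x := by linarith [hx.1]
      have hx1 : x < 1 := by linarith [hx.2]
      have hSx : S (δ/2) ≤ S x := S_anti_aux hβ hx0 hx.2 (by linarith)
      rw [hfg]
      apply mul_le_mul_of_nonneg_right _ (hg_nonneg x ⟨hx0, hx1.le⟩)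
      exact Real.exp_le_exp.2 (mul_le_mul_of_nonneg_left hSx (Nat.cast_nonneg n))
    have step1 : (∫ x in (δ/4)..(δ/2), f n x) ≤ ∫ x in (0:ℝ)..1, f n x := by
      apply intervalIntegral.integral_mono_interval (by linarith) (by linarith) (by linarith)
        _ (hf_int n)
      filter_upwards [MeasureTheory.ae_restrict_mem measurableSet_Ioc] with x hx
      rw [hfg]
      exact mul_nonneg (Real.exp_pos _).le (hg_nonneg x ⟨hx.1.le, hx.2⟩)
    linarith
  have hc_pos : 0 < c := by
    apply intervalIntegral.intervalIntegral_pos_of_pos_on (hg_int.mono_set hsub2) _ (by linarith)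
    intro x hx
    have hx0 : 0 < x := by linarith [hx.1]
    have hx1 : x < 1 := by linarith [hx.2]
    exact mul_pos (Real.rpow_pos_of_pos hx0 _) (Real.rpow_pos_of_pos (by linarith) _)
  have hC_nonneg : 0 ≤ C := by
    apply intervalIntegral.integral_nonneg hδ1.le
    intro x hx
    exact hg_nonneg x ⟨by linarith [hx.1], hx.2⟩
  have hnum_nonneg : ∀ n : ℕ, 0 ≤ ∫ x in δ..1, f n x := by
    intro n
    apply intervalIntegral.integral_nonneg hδ1.le
    intro x hx
    rw [hfg]
    exact mul_nonneg (Real.exp_pos _).le (hg_nonneg x ⟨by linarith [hx.1], hx.2⟩)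
  have hden_pos : ∀ n : ℕ, 0 < ∫ x in (0:ℝ)..1, f n x := fun n =>
    lt_of_lt_of_le (mul_pos (Real.exp_pos _) hc_pos) (hden_ge n)
  set K : ℝ := S δ - S (δ/2) with hK
  have hK_neg : K < 0 := by
    have := S_strict_anti_aux hβ (x := δ/2) (y := δ) (by linarith) (by linarith) hδ1
    simp only [hK, hS]; linarith [this]
  -- squeeze
  apply squeeze_zero (g := fun n : ℕ => Real.exp ((n:ℝ) * K) * (C / c))
  · intro n
    exact div_nonneg (hnum_nonneg n) (hden_pos n).le
  · intro n
    have h1 : (∫ x in δ..1, f n x) / (∫ x in (0:ℝ)..1, f n x)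
        ≤ (Real.exp ((n:ℝ) * S δ) * C) / (Real.exp ((n:ℝ) * S (δ/2)) * c) := by
      apply div_le_div₀ (by positivity) (hnum_le n) (by positivity) (hden_ge n)
    calc (∫ x in δ..1, f n x) / (∫ x in (0:ℝ)..1, f n x)
        ≤ (Real.exp ((n:ℝ) * S δ) * C) / (Real.exp ((n:ℝ) * S (δ/2)) * c) := h1
      _ = Real.exp ((n:ℝ) * K) * (C / c) := by
          rw [mul_div_mul_comm, ← Real.exp_sub]
          congr 1
          simp only [hK]; ring
  · have h1 : Tendsto (fun n : ℕ => (n:ℝ) * K) atTop atBot :=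
      tendsto_natCast_atTop_atTop.atTop_mul_const_of_neg' hK_neg
    have h2 : Tendsto (fun n : ℕ => Real.exp ((n:ℝ) * K)) atTop (𝓝 0) :=
      Real.tendsto_exp_atBot.comp h1
    have := h2.mul_const (C / c)
    simpa using this
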